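/- Let k be a field and B a unital associative k-algebra. Suppose condition (Q0) holds: every simple left B[X]-module M, regarded as a module over k[X] via the central embedding k[X] ⊆ B[X], is generically free over k[X], i.e., there exists a nonzero f ∈ k[X] such that the localized module M_f = k[X]_f ⊗_{k[X]} M is a free k[X]_f-module. Then condition (D) holds: for every simple left B[X]-module M, the endomorphism φ(m) = X·m is algebraic over k; equivalently, there exists a nonzero polynomial g ∈ k[X] with g·M = 0. -/

import Mathlib

open Polynomial

theorem central_comm (k B : Type) [Field k] [Ring B] [Algebra k B]
    (g : Polynomial k) (q : Polynomial B) :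
    Commute (g.map (algebraMap k B)) q := by
  induction g using Polynomial.induction_on' with
  | add p r hp hr => simpa [Polynomial.map_add] using hp.add_left hr
  | monomial n a =>
    rw [Polynomial.map_monomial, ← Polynomial.C_mul_X_pow_eq_monomial]
    have hC : Commute (Polynomial.C (algebraMap k B a)) q := by
      show _ = _
      ext m
      simp [Polynomial.coeff_C_mul, Polynomial.coeff_mul_C, (Algebra.commutes a (q.coeff m))]
    have hX : Commute ((Polynomial.X : Polynomial B) ^ n) q :=
      (Polynomial.commute_X q).pow_left n
    exact hC.mul_left hX

/-- Let `k` be a field and `B` a unital `k`-algebra.  Suppose (Q0): every simple left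
`B[X]`-module `M`, regarded as a `k[X]`-module via the central embedding
`k[X] → B[X]`, is generically free over `k[X]`, i.e. there is a nonzero `f ∈ k[X]`
such that the localization `M_f` is free over `k[X]_f`.  Then (D) holds: for every
simple left `B[X]`-module `M` there is a nonzero `g ∈ k[X]` with `g • M = 0`
(equivalently, the endomorphism `φ(m) = X • m` is algebraic over `k`). -/
theorem condition_Q0_implies_condition_D (k B : Type) [Field k] [Ring B] [Algebra k B]
    (hQ0 : ∀ (M : Type) [AddCommGroup M] [Module (Polynomial B) M],
      IsSimpleModule (Polynomial B) M →
      letI : Module (Polynomial k) M :=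
        Module.compHom M (Polynomial.mapRingHom (algebraMap k B))
      ∃ f : Polynomial k, f ≠ 0 ∧
        Module.Free (Localization (Submonoid.powers f))
          (LocalizedModule (Submonoid.powers f) M)) :
    ∀ (M : Type) [AddCommGroup M] [Module (Polynomial B) M],
      IsSimpleModule (Polynomial B) M →
      ∃ g : Polynomial k, g ≠ 0 ∧ ∀ m : M, (g.map (algebraMap k B)) • m = 0 := by
  intro M _ _ hM
  letI : Module (Polynomial k) M :=
    Module.compHom M (Polynomial.mapRingHom (algebraMap k B))
  obtain ⟨f, hf, hfree⟩ := hQ0 M hM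
  by_contra hcon
  push_neg at hcon
  -- every nonzero g ∈ k[X] acts bijectively on M
  have hbij : ∀ g : Polynomial k, g ≠ 0 →
      Function.Bijective (fun m : M => (g.map (algebraMap k B)) • m) := by
    intro g hg
    obtain ⟨m₀, hm₀⟩ := hcon g hg
    let ψ : M →ₗ[Polynomial B] M :=
      { toFun := fun m => (g.map (algebraMap k B)) • m
        map_add' := fun x y => smul_add _ x y
        map_smul' := fun q m => by
          simp only [RingHom.id_apply, smul_smul]
          rw [(central_comm k B g q).eq] }
    have h1 : LinearMap.ker ψ ≠ ⊤ := by
      intro h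
      exact hm₀ (LinearMap.mem_ker.mp (h ▸ Submodule.mem_top (x := m₀)))
    have h2 : LinearMap.range ψ ≠ ⊥ := by
      intro h
      apply hm₀
      have h3 : ψ m₀ ∈ LinearMap.range ψ := LinearMap.mem_range_self _ _
      rw [h] at h3
      exact (Submodule.mem_bot _).mp h3
    constructor
    · exact LinearMap.ker_eq_bot (f := ψ) |>.mp
        ((eq_bot_or_eq_top (LinearMap.ker ψ)).resolve_right h1)
    · exact LinearMap.range_eq_top (f := ψ) |>.mp
        ((eq_bot_or_eq_top (LinearMap.range ψ)).resolve_left h2)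
  set S := Submonoid.powers f
  set A := Localization S
  set N := LocalizedModule S M
  -- powers of f act injectively
  have hpowinj : ∀ (n : ℕ) (m : M), (f ^ n : Polynomial k) • m = 0 → m = 0 := by
    intro n
    induction n with
    | zero => intro m h; simpa using h
    | succ n ih =>
      intro m h
      rw [pow_succ, mul_smul] at h
      have h1 : (f • m : M) = 0 := ih _ h
      have h0 : f.map (algebraMap k B) • m = (0 : M) := h1
      exact (hbij f hf).1 (a₁ := m) (a₂ := 0) (by simpa using h0)
  -- N is nontrivial
  have : Nontrivial M := IsSimpleModule.nontrivial (Polynomial B) M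
  obtain ⟨m₀, hm₀⟩ := exists_ne (0 : M)
  have hN : (LocalizedModule.mk m₀ 1 : N) ≠ 0 := by
    intro h
    rw [← LocalizedModule.zero_mk (1 : S), LocalizedModule.mk_eq] at h
    obtain ⟨u, hu⟩ := h
    obtain ⟨n, hn⟩ := u.2
    have hu' : (u : Polynomial k) • m₀ = 0 := by
      have h' := hu
      simp at h'
      exact h'
    exact hm₀ (hpowinj n m₀ (by rw [show f ^ n = (u : Polynomial k) from hn]; exact hu'))
  haveI : Nontrivial N := nontrivial_of_ne _ _ hN
  -- an irreducible p with p ∤ fⁿ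
  have hdfX : (f * X : Polynomial k).degree = f.degree + 1 := by
    rw [degree_mul, degree_X]
  have h1lt : (1 : Polynomial k).degree < (f * X : Polynomial k).degree := by
    rw [degree_one, hdfX]
    calc (0 : WithBot ℕ) < 0 + 1 := by norm_num
    _ ≤ f.degree + 1 := add_le_add (zero_le_degree_iff.mpr hf) le_rfl
  have hd : (f * X + 1 : Polynomial k).degree = ((f.natDegree + 1 : ℕ) : WithBot ℕ) := by
    rw [degree_add_eq_left_of_degree_lt h1lt, hdfX, degree_eq_natDegree hf]
    push_cast
    rfl
  have hq0 : (f * X + 1 : Polynomial k) ≠ 0 := by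
    intro h
    rw [h, degree_zero] at hd
    exact WithBot.bot_ne_coe hd
  have hqnu : ¬ IsUnit (f * X + 1 : Polynomial k) := by
    rw [Polynomial.isUnit_iff_degree_eq_zero, hd]
    intro h
    have : (f.natDegree + 1 : ℕ) = 0 := by exact_mod_cast h
    omega
  obtain ⟨p, hp, hpq⟩ := WfDvdMonoid.exists_irreducible_factor hqnu hq0
  have hp0 : p ≠ 0 := hp.ne_zero
  -- multiplication by p is surjective on N
  have hsurj : ∀ x : N, ∃ y : N, algebraMap (Polynomial k) A p • y = x := by
    intro x
    induction x using LocalizedModule.induction_on with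
    | _ m s =>
      obtain ⟨m', hm'⟩ := (hbij p hp0).2 m
      refine ⟨LocalizedModule.mk m' s, ?_⟩
      rw [← Localization.mk_one_eq_algebraMap, LocalizedModule.mk_smul_mk, one_mul]
      exact congrArg (fun z => LocalizedModule.mk z s) hm'
  -- hence the image of p in A is a unit
  haveI := hfree
  let b := Module.Free.chooseBasis A N
  obtain ⟨i⟩ := b.index_nonempty
  obtain ⟨y, hy⟩ := hsurj (b i)
  have hrep := congrArg (fun z => b.repr z i) hy
  simp only [map_smul, Finsupp.smul_apply, smul_eq_mul, Module.Basis.repr_self,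
    Finsupp.single_eq_same] at hrep
  -- extract: p * r = fⁿ in k[X]
  obtain ⟨⟨r, s⟩, hs⟩ := IsLocalization.surj S (b.repr y i)
  simp only at hs
  have hinj : Function.Injective (algebraMap (Polynomial k) A) :=
    IsLocalization.injective A (powers_le_nonZeroDivisors_of_noZeroDivisors hf)
  have key : p * r = (s : Polynomial k) := by
    apply hinj
    rw [map_mul, ← hs, ← mul_assoc, hrep, one_mul]
  obtain ⟨n, hn⟩ := s.2
  have hdvd : p ∣ f ^ n := ⟨r, by rw [show (f ^ n : Polynomial k) = s from hn]; exact key.symm⟩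
  have hpf : p ∣ f := hp.prime.dvd_of_dvd_pow hdvd
  have : p ∣ 1 := (dvd_add_right (hpf.mul_right X)).mp hpq
  exact hp.not_isUnit (isUnit_of_dvd_one this)
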